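/- Let R₁ and R₂ be unambiguous regexes over Σ whose languages overlap (so R₁·R₂ is ambiguous). If there do NOT exist words b, d, e, g over Σ with c := d ++ e nonempty such that b ++ c^i ++ d ∈ L(R₁) for every i ∈ ℕ and e ++ c^j ++ g ∈ L(R₂) for every j ∈ ℕ, then the concatenation R₁·R₂ is finitely ambiguous. (Paper's Theorem 2(b).) -/

import Mathlib

/-! Shared definitions: words, word power, parse trees of regular expressions,
(un)ambiguity, finite/infinite ambiguity, and the Brabrand–Thomsen overlap. -/

universe u

variable {α : Type u}

/-- `wpow w n` is the `n`-fold concatenation `w^n` of the word `w` with itself. -/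
def wpow (w : List α) : ℕ → List α
  | 0 => []
  | n + 1 => w ++ wpow w n

/-- Parse trees of a regular expression for a word, defined inductively:
the regex `ε` has a unique parse tree for the empty word; the character regex
for `a` has a unique parse tree for the word `[a]`; a parse tree of `R₁ + R₂`
(alternation) for `w` is a parse tree of `R₁` for `w` or a parse tree of `R₂`
for `w` (the two sides distinct); a parse tree of `R₁ * R₂` (concatenation)
for `w` is a decomposition `w = u ++ v` with parse trees of `R₁` for `u` and
of `R₂` for `v`; a parse tree of `R*` for `w` is a finite list of words
(possibly empty entries) concatenating to `w` with a parse tree of `R` for each. -/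
inductive ParseTree : RegularExpression α → List α → Type u where
  | eps : ParseTree RegularExpression.epsilon []
  | char (a : α) : ParseTree (RegularExpression.char a) [a]
  | plusLeft {R₁ R₂ : RegularExpression α} {w : List α} :
      ParseTree R₁ w → ParseTree (R₁ + R₂) w
  | plusRight {R₁ R₂ : RegularExpression α} {w : List α} :
      ParseTree R₂ w → ParseTree (R₁ + R₂) w
  | comp {R₁ R₂ : RegularExpression α} {u v : List α} :
      ParseTree R₁ u → ParseTree R₂ v → ParseTree (R₁ * R₂) (u ++ v)
  | starNil {R : RegularExpression α} : ParseTree R.star []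
  | starCons {R : RegularExpression α} {u v : List α} :
      ParseTree R u → ParseTree R.star v → ParseTree R.star (u ++ v)

/-- A regex is unambiguous if every word has at most one parse tree of it. -/
def Unambiguous (R : RegularExpression α) : Prop :=
  ∀ (w : List α) (t₁ t₂ : ParseTree R w), t₁ = t₂

/-- A regex is ambiguous if some word has two distinct parse trees of it. -/
def Ambiguous (R : RegularExpression α) : Prop :=
  ∃ (w : List α) (t₁ t₂ : ParseTree R w), t₁ ≠ t₂

/-- The word `w` has at least `k` distinct parse trees of `R`. -/
def HasAtLeastTrees (R : RegularExpression α) (w : List α) (k : ℕ) : Prop :=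
  ∃ l : List (ParseTree R w), l.Nodup ∧ k ≤ l.length

/-- Every word has at most `k` parse trees of `R`. -/
def BoundedBy (R : RegularExpression α) (k : ℕ) : Prop :=
  ∀ (w : List α) (l : List (ParseTree R w)), l.Nodup → l.length ≤ k

/-- `R` is finitely ambiguous: ambiguous, with a uniform bound on the number
of parse trees of any word. -/
def FinitelyAmbiguous (R : RegularExpression α) : Prop :=
  Ambiguous R ∧ ∃ k : ℕ, BoundedBy R k

/-- `R` is infinitely ambiguous: for every `k` some word has more than `k`
parse trees of `R`. -/
def InfinitelyAmbiguous (R : RegularExpression α) : Prop :=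
  ∀ k : ℕ, ∃ w : List α, HasAtLeastTrees R w (k + 1)

/-- Languages `L₁` and `L₂` overlap (nonemptiness of the Brabrand–Thomsen
overlap operator): there are words `x`, `y` and a nonempty word `a` with
`x ∈ L₁`, `x ++ a ∈ L₁`, `a ++ y ∈ L₂`, and `y ∈ L₂`. -/
def Overlaps (L₁ L₂ : Language α) : Prop :=
  ∃ x y a : List α, a ≠ [] ∧ x ∈ L₁ ∧ x ++ a ∈ L₁ ∧ a ++ y ∈ L₂ ∧ y ∈ L₂

open RegularExpression Language

theorem mem_of_tree : ∀ {R : RegularExpression α} {w : List α}, ParseTree R w → w ∈ R.matches'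
  | _, _, .eps => by simp [matches'_epsilon, Language.mem_one]
  | _, _, .char a => by simp only [matches'_char]; rfl
  | _, _, .plusLeft t => by
      simp only [matches'_add, Language.mem_add]; exact Or.inl (mem_of_tree t)
  | _, _, .plusRight t => by
      simp only [matches'_add, Language.mem_add]; exact Or.inr (mem_of_tree t)
  | _, _, .comp t₁ t₂ => by
      simp only [matches'_mul]
      exact Language.append_mem_mul (mem_of_tree t₁) (mem_of_tree t₂)
  | _, _, .starNil => by simp only [matches'_star]; exact Language.nil_mem_kstar _
  | _, _, .starCons (u := x) t₁ t₂ => by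
      simp only [matches'_star]
      have h₁ := mem_of_tree t₁
      have h₂ := mem_of_tree t₂
      rw [matches'_star, Language.mem_kstar] at h₂
      obtain ⟨S, rfl, hS⟩ := h₂
      rw [Language.mem_kstar]
      refine ⟨x :: S, rfl, ?_⟩
      intro y hy
      rcases List.mem_cons.1 hy with rfl | hy
      exacts [h₁, hS y hy]

theorem tree_of_mem : ∀ (R : RegularExpression α) (w : List α), w ∈ R.matches' →
    Nonempty (ParseTree R w)
  | .zero, w, h => by simp [matches'_zero] at h
  | .epsilon, w, h => by
      have h' : w = [] := h
      subst h'; exact ⟨.eps⟩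
  | .char a, w, h => by
      have h' : w = [a] := h
      subst h'; exact ⟨.char a⟩
  | .plus P Q, w, h => by
      rcases h with h | h
      · exact (tree_of_mem P w h).elim fun t => ⟨.plusLeft t⟩
      · exact (tree_of_mem Q w h).elim fun t => ⟨.plusRight t⟩
  | .comp P Q, w, h => by
      obtain ⟨a, ha, b, hb, rfl⟩ := Language.mem_mul.1 h
      exact (tree_of_mem P a ha).elim fun t₁ => (tree_of_mem Q b hb).elim fun t₂ =>
        ⟨.comp t₁ t₂⟩
  | .star P, w, h => by
      obtain ⟨S, rfl, hS⟩ := Language.mem_kstar.1 h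
      clear h
      suffices go : ∀ T : List (List α), (∀ y ∈ T, y ∈ P.matches') →
          Nonempty (ParseTree P.star T.flatten) from go S hS
      intro S
      induction S with
      | nil => exact fun _ => ⟨.starNil⟩
      | cons x S ih =>
        intro hS
        obtain ⟨t⟩ := tree_of_mem P x (hS x (by simp))
        obtain ⟨ts⟩ := ih (fun y hy => hS y (by simp [hy]))
        exact ⟨.starCons t ts⟩

def leftW : ∀ {R : RegularExpression α} {w : List α}, ParseTree R w → List α
  | _, _, .comp (u := u) _ _ => u
  | _, _, _ => []

def rightW : ∀ {R : RegularExpression α} {w : List α}, ParseTree R w → List α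
  | _, _, .comp (v := v) _ _ => v
  | _, _, _ => []

theorem comp_destruct {R₁ R₂ : RegularExpression α} {w : List α}
    (t : ParseTree (R₁ * R₂) w) :
    ∃ (u v : List α) (t₁ : ParseTree R₁ u) (t₂ : ParseTree R₂ v) (h : u ++ v = w),
      t = h ▸ ParseTree.comp t₁ t₂ := by
  cases t with
  | comp t₁ t₂ => exact ⟨_, _, t₁, t₂, rfl, rfl⟩

theorem leftW_cast {R : RegularExpression α} {w w' : List α} (h : w = w')
    (t : ParseTree R w) : leftW (h ▸ t) = leftW t := by subst h; rfl

theorem rightW_cast {R : RegularExpression α} {w w' : List α} (h : w = w')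
    (t : ParseTree R w) : rightW (h ▸ t) = rightW t := by subst h; rfl

theorem leftW_append_rightW {R₁ R₂ : RegularExpression α} {w : List α}
    (t : ParseTree (R₁ * R₂) w) : leftW t ++ rightW t = w := by
  obtain ⟨u, v, t₁, t₂, h, rfl⟩ := comp_destruct t
  subst h
  rfl

theorem leftW_mem {R₁ R₂ : RegularExpression α} {w : List α}
    (t : ParseTree (R₁ * R₂) w) : leftW t ∈ R₁.matches' := by
  obtain ⟨u, v, t₁, t₂, h, rfl⟩ := comp_destruct t
  subst h
  exact mem_of_tree t₁

theorem rightW_mem {R₁ R₂ : RegularExpression α} {w : List α}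
    (t : ParseTree (R₁ * R₂) w) : rightW t ∈ R₂.matches' := by
  obtain ⟨u, v, t₁, t₂, h, rfl⟩ := comp_destruct t
  subst h
  exact mem_of_tree t₂

theorem eq_of_leftW_eq {R₁ R₂ : RegularExpression α} (h₁ : Unambiguous R₁)
    (h₂ : Unambiguous R₂) {w : List α} (t t' : ParseTree (R₁ * R₂) w)
    (h : leftW t = leftW t') : t = t' := by
  obtain ⟨u, v, t₁, t₂, hw, rfl⟩ := comp_destruct t
  subst hw
  obtain ⟨u', v', t₁', t₂', hw', rfl⟩ := comp_destruct t'
  rw [leftW_cast] at h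
  have hu : u = u' := h
  subst hu
  have hv : v' = v := List.append_cancel_left hw'
  subst hv
  rw [Subsingleton.elim hw' rfl]
  rw [h₁ _ t₁ t₁', h₂ _ t₂ t₂']

open Computability

attribute [local instance] Classical.propDecidable

/-- Finite type of (right-)residual classes for a regex. -/
def tau : RegularExpression α → Type
  | .zero => PUnit
  | .epsilon => Bool
  | .char _ => Bool × Bool
  | .plus P Q => tau P × tau Q
  | .comp P Q => tau P × (tau Q → Bool)
  | .star P => Bool × (tau P → Bool)

def tauFD : ∀ R : RegularExpression α, Fintype (tau R) × DecidableEq (tau R)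
  | .zero => ⟨inferInstanceAs (Fintype PUnit), inferInstanceAs (DecidableEq PUnit)⟩
  | .epsilon => ⟨inferInstanceAs (Fintype Bool), inferInstanceAs (DecidableEq Bool)⟩
  | .char _ => ⟨inferInstanceAs (Fintype (Bool × Bool)), inferInstanceAs (DecidableEq (Bool × Bool))⟩
  | .plus P Q => by
      have hP := tauFD P; have hQ := tauFD Q
      haveI := hP.1; haveI := hP.2; haveI := hQ.1; haveI := hQ.2
      exact ⟨inferInstanceAs (Fintype (tau P × tau Q)),
        inferInstanceAs (DecidableEq (tau P × tau Q))⟩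
  | .comp P Q => by
      have hP := tauFD P; have hQ := tauFD Q
      haveI := hP.1; haveI := hP.2; haveI := hQ.1; haveI := hQ.2
      exact ⟨inferInstanceAs (Fintype (tau P × (tau Q → Bool))),
        inferInstanceAs (DecidableEq (tau P × (tau Q → Bool)))⟩
  | .star P => by
      have hP := tauFD P
      haveI := hP.1; haveI := hP.2
      exact ⟨inferInstanceAs (Fintype (Bool × (tau P → Bool))),
        inferInstanceAs (DecidableEq (Bool × (tau P → Bool)))⟩

instance tauFintype (R : RegularExpression α) : Fintype (tau R) := (tauFD R).1

/-- The residual class of a word `u` with respect to `R`. -/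
noncomputable def phi : ∀ R : RegularExpression α, List α → tau R
  | .zero, _ => PUnit.unit
  | .epsilon, u => decide (u = [])
  | .char a, u => (decide (u = []), decide (u = [a]))
  | .plus P Q, u => (phi P u, phi Q u)
  | .comp P Q, u =>
      (phi P u, fun s => decide (∃ x rest, u = x ++ rest ∧ x ∈ P.matches' ∧ phi Q rest = s))
  | .star P, u =>
      (decide (u = []), fun s => decide (∃ x rest, u = x ++ rest ∧ x ∈ P.matches'∗ ∧
        rest ≠ [] ∧ phi P rest = s))

theorem flatten_split : ∀ (S : List (List α)) (u t : List α), u ++ t = S.flatten → u ≠ [] →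
    ∃ (S₁ : List (List α)) (w₁ w₂ : List α) (S₂ : List (List α)),
      S = S₁ ++ (w₁ ++ w₂) :: S₂ ∧ u = S₁.flatten ++ w₁ ∧ t = w₂ ++ S₂.flatten ∧ w₁ ≠ [] := by
  intro S
  induction S with
  | nil => intro u t h hu; simp only [List.flatten_nil, List.append_eq_nil_iff] at h; exact (hu h.1).elim
  | cons w S ih =>
    intro u t h hu
    rw [List.flatten_cons] at h
    rcases List.append_eq_append_iff.1 h with ⟨a', ha1, ha2⟩ | ⟨c', hc1, hc2⟩
    · exact ⟨[], u, a', S, by rw [ha1]; rfl, by simp, ha2, hu⟩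
    · rcases eq_or_ne c' [] with rfl | hc
      · refine ⟨[], u, [], S, ?_, by simp, ?_, hu⟩
        · simp [hc1]
        · simpa using hc2.symm
      · obtain ⟨S₁, w₁, w₂, S₂, hS, hu2, ht2, hw1⟩ := ih c' t hc2.symm hc
        exact ⟨w :: S₁, w₁, w₂, S₂, by rw [hS]; rfl,
          by rw [hc1, hu2, List.flatten_cons, List.append_assoc], ht2, hw1⟩

theorem phi_spec (R : RegularExpression α) : ∀ u u' : List α, phi R u = phi R u' →
    ∀ t, u ++ t ∈ R.matches' → u' ++ t ∈ R.matches' := by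
  induction R with
  | zero => intro u u' _ t h; simp [RegularExpression.matches'_zero] at h
  | epsilon =>
    intro u u' h t hm
    have h' : ((u = []) : Prop) ↔ (u' = []) := by
      have hb : decide (u = []) = decide (u' = []) := h
      rwa [decide_eq_decide] at hb
    have hm' : u ++ t = [] := hm
    have hu : u = [] := (List.append_eq_nil_iff.1 hm').1
    have ht : t = [] := (List.append_eq_nil_iff.1 hm').2
    show u' ++ t = []
    rw [h'.1 hu, ht]; rfl
  | char a =>
    intro u u' h t hm
    have hb : ((decide (u = []), decide (u = [a])) : Bool × Bool)
        = (decide (u' = []), decide (u' = [a])) := h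
    rw [Prod.mk.injEq, decide_eq_decide, decide_eq_decide] at hb
    have hm' : u ++ t = [a] := hm
    show u' ++ t = [a]
    rcases List.append_eq_cons_iff.1 hm' with ⟨hu, ht⟩ | ⟨s, hu, hs⟩
    · rw [hb.1.1 hu, ht]; rfl
    · have hs' := List.append_eq_nil_iff.1 hs.symm
      have hua : u = [a] := by rw [hu, hs'.1]
      rw [hb.2.1 hua, hs'.2]; rfl
  | plus P Q ihP ihQ =>
    intro u u' h t hm
    have hb : ((phi P u, phi Q u) : tau P × tau Q) = (phi P u', phi Q u') := h
    rw [Prod.mk.injEq] at hb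
    rcases hm with hm | hm
    · exact Or.inl (ihP u u' hb.1 t hm)
    · exact Or.inr (ihQ u u' hb.2 t hm)
  | comp P Q ihP ihQ =>
    intro u u' h t hm
    have hb : ((phi P u, fun s => decide (∃ x rest, u = x ++ rest ∧ x ∈ P.matches' ∧
          phi Q rest = s)) : tau P × (tau Q → Bool))
        = (phi P u', fun s => decide (∃ x rest, u' = x ++ rest ∧ x ∈ P.matches' ∧
          phi Q rest = s)) := h
    have hb1 : phi P u = phi P u' := congrArg Prod.fst hb
    have hb2 := congrArg Prod.snd hb
    obtain ⟨p, hp, q, hq, hpq⟩ := Language.mem_mul.1 hm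
    rcases List.append_eq_append_iff.1 hpq.symm with ⟨t₁, hp', ht⟩ | ⟨rest, hu, hq'⟩
    · -- u is a prefix of p : p = u ++ t₁, t = t₁ ++ q
      have hp'' : u' ++ t₁ ∈ P.matches' := ihP u u' hb1 t₁ (hp' ▸ hp)
      have : u' ++ t = (u' ++ t₁) ++ q := by rw [ht, List.append_assoc]
      rw [this]
      exact Language.append_mem_mul hp'' hq
    · -- p is a prefix of u : u = p ++ rest, q = rest ++ t
      have hset : (∃ x r, u = x ++ r ∧ x ∈ P.matches' ∧ phi Q r = phi Q rest) ↔
          (∃ x r, u' = x ++ r ∧ x ∈ P.matches' ∧ phi Q r = phi Q rest) :=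
        decide_eq_decide.1 (congrFun hb2 (phi Q rest))
      obtain ⟨x', r', hu', hx', hr'⟩ := hset.1 ⟨p, rest, hu, hp, rfl⟩
      have hq'' : r' ++ t ∈ Q.matches' := ihQ rest r' hr'.symm t (hq' ▸ hq)
      have : u' ++ t = x' ++ (r' ++ t) := by rw [hu', List.append_assoc]
      rw [this]
      exact Language.append_mem_mul hx' hq''
  | star P ihP =>
    intro u u' h t hm
    have hb : ((decide (u = []), fun s => decide (∃ x rest, u = x ++ rest ∧
          x ∈ P.matches'∗ ∧ rest ≠ [] ∧ phi P rest = s)) : Bool × (tau P → Bool))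
        = (decide (u' = []), fun s => decide (∃ x rest, u' = x ++ rest ∧
          x ∈ P.matches'∗ ∧ rest ≠ [] ∧ phi P rest = s)) := h
    have hb1 : ((u = []) : Prop) ↔ (u' = []) := decide_eq_decide.1 (congrArg Prod.fst hb)
    have hb2 := congrArg Prod.snd hb
    rcases eq_or_ne u [] with hu | hu
    · rw [hb1.1 hu] at *; rw [hu] at hm; exact hm
    · obtain ⟨S, hflat, hS⟩ := Language.mem_kstar_iff_exists_nonempty.1 hm
      obtain ⟨S₁, w₁, w₂, S₂, hSdec, hu2, ht2, hw1⟩ := flatten_split S u t hflat hu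
      have hx : S₁.flatten ∈ P.matches'∗ :=
        Language.join_mem_kstar fun y hy => (hS y (by rw [hSdec]; simp [hy])).1
      have hset : (∃ x r, u = x ++ r ∧ x ∈ P.matches'∗ ∧ r ≠ [] ∧ phi P r = phi P w₁) ↔
          (∃ x r, u' = x ++ r ∧ x ∈ P.matches'∗ ∧ r ≠ [] ∧ phi P r = phi P w₁) :=
        decide_eq_decide.1 (congrFun hb2 (phi P w₁))
      obtain ⟨x', r', hu', hx', hr', hphir⟩ := hset.1 ⟨S₁.flatten, w₁, hu2, hx, hw1, rfl⟩
      have hblock : w₁ ++ w₂ ∈ P.matches' := (hS (w₁ ++ w₂) (by rw [hSdec]; simp)).1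
      have hblock' : r' ++ w₂ ∈ P.matches' := ihP w₁ r' hphir.symm w₂ hblock
      obtain ⟨T₁, hT1, hT1mem⟩ := Language.mem_kstar.1 hx'
      have hS₂ : ∀ y ∈ S₂, y ∈ P.matches' := fun y hy => (hS y (by rw [hSdec]; simp [hy])).1
      have heq : u' ++ t = (T₁ ++ (r' ++ w₂) :: S₂).flatten := by
        rw [List.flatten_append, List.flatten_cons, hu', ht2, ← hT1]
        simp [List.append_assoc]
      rw [heq]
      exact Language.join_mem_kstar (by
        intro y hy
        rcases List.mem_append.1 hy with hy | hy
        · exact hT1mem y hy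
        · rcases List.mem_cons.1 hy with rfl | hy
          exacts [hblock', hS₂ y hy])

theorem phi_spec_iff (R : RegularExpression α) {u u' : List α} (h : phi R u = phi R u')
    (t : List α) : u ++ t ∈ R.matches' ↔ u' ++ t ∈ R.matches' :=
  ⟨phi_spec R u u' h t, phi_spec R u' u h.symm t⟩

/-- Reversal of a regular expression. -/
def rrev : RegularExpression α → RegularExpression α
  | .zero => .zero
  | .epsilon => .epsilon
  | .char a => .char a
  | .plus P Q => .plus (rrev P) (rrev Q)
  | .comp P Q => .comp (rrev Q) (rrev P)
  | .star P => .star (rrev P)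

theorem matches'_rrev : ∀ R : RegularExpression α, (rrev R).matches' = R.matches'.reverse
  | .zero => by
      ext x
      simp only [rrev, matches'_zero, Language.mem_reverse]
      exact Iff.rfl
  | .epsilon => by
      ext x
      simp only [rrev, matches'_epsilon, Language.mem_reverse, Language.mem_one]
      constructor
      · rintro rfl; rfl
      · intro h; simpa using congrArg List.reverse h
  | .char a => by
      ext x
      simp only [rrev, matches'_char, Language.mem_reverse, Set.mem_singleton_iff]
      constructor
      · rintro rfl; rfl
      · intro h; exact (by simpa using congrArg List.reverse h : x = [a])
  | .plus P Q => by
      rw [show rrev (.plus P Q) = .plus (rrev P) (rrev Q) from rfl]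
      rw [show (RegularExpression.plus P Q).matches' = P.matches' + Q.matches' from rfl]
      rw [show (RegularExpression.plus (rrev P) (rrev Q)).matches'
          = (rrev P).matches' + (rrev Q).matches' from rfl]
      rw [matches'_rrev P, matches'_rrev Q, Language.reverse_add]
  | .comp P Q => by
      rw [show rrev (.comp P Q) = .comp (rrev Q) (rrev P) from rfl]
      rw [show (RegularExpression.comp P Q).matches' = P.matches' * Q.matches' from rfl]
      rw [show (RegularExpression.comp (rrev Q) (rrev P)).matches'
          = (rrev Q).matches' * (rrev P).matches' from rfl]
      rw [matches'_rrev P, matches'_rrev Q, Language.reverse_mul]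
  | .star P => by
      rw [show rrev (.star P) = .star (rrev P) from rfl]
      rw [show (RegularExpression.star P).matches' = P.matches'∗ from rfl]
      rw [show (RegularExpression.star (rrev P)).matches' = (rrev P).matches'∗ from rfl]
      rw [matches'_rrev P, Language.reverse_kstar]

/-- The left-residual class of a word `v` with respect to `R`. -/
noncomputable def psi (R : RegularExpression α) (v : List α) : tau (rrev R) :=
  phi (rrev R) v.reverse

theorem psi_spec (R : RegularExpression α) {v v' : List α} (h : psi R v = psi R v')
    (s : List α) : s ++ v ∈ R.matches' → s ++ v' ∈ R.matches' := by
  intro hm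
  have key := phi_spec (rrev R) v.reverse v'.reverse h s.reverse
  rw [matches'_rrev R] at key
  have h1 : v.reverse ++ s.reverse ∈ R.matches'.reverse := by
    rw [Language.mem_reverse]
    simpa using hm
  have h2 := key h1
  rw [Language.mem_reverse] at h2
  simpa using h2

theorem psi_spec_iff (R : RegularExpression α) {v v' : List α} (h : psi R v = psi R v')
    (s : List α) : s ++ v ∈ R.matches' ↔ s ++ v' ∈ R.matches' :=
  ⟨psi_spec R h s, psi_spec R h.symm s⟩

theorem no_pump {R₁ R₂ : RegularExpression α}
    (hno : ¬ ∃ b d e g : List α, d ++ e ≠ [] ∧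
        (∀ i : ℕ, b ++ wpow (d ++ e) i ++ d ∈ R₁.matches') ∧
        (∀ j : ℕ, e ++ wpow (d ++ e) j ++ g ∈ R₂.matches'))
    {u v u' v' : List α}
    (hu : u ∈ R₁.matches') (hv : v ∈ R₂.matches')
    (heq : u ++ v = u' ++ v') (hlen : u.length < u'.length)
    (hphi : phi R₁ u = phi R₁ u') (hpsi : psi R₂ v = psi R₂ v') : False := by
  rcases List.append_eq_append_iff.1 heq with ⟨c, hc, hvc⟩ | ⟨c', h1, _⟩
  swap
  · have := congrArg List.length h1
    simp [List.length_append] at this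
    omega
  have hc0 : c ≠ [] := by
    intro h
    rw [h, List.append_nil] at hc
    rw [hc] at hlen
    omega
  have hstep1 : ∀ t, u ++ t ∈ R₁.matches' ↔ u ++ (c ++ t) ∈ R₁.matches' := by
    intro t
    have h := phi_spec_iff R₁ hphi t
    rw [hc, List.append_assoc] at h
    exact h
  have claim1 : ∀ (i : ℕ) (t : List α),
      u ++ (wpow c i ++ t) ∈ R₁.matches' ↔ u ++ t ∈ R₁.matches' := by
    intro i
    induction i with
    | zero => intro t; rw [show wpow c 0 = [] from rfl, List.nil_append]
    | succ n ih =>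
      intro t
      rw [show wpow c (n + 1) = c ++ wpow c n from rfl, List.append_assoc]
      rw [← hstep1 (wpow c n ++ t)]
      exact ih t
  have hstep2 : ∀ s, s ++ (c ++ v') ∈ R₂.matches' ↔ s ++ v' ∈ R₂.matches' := by
    intro s
    have h := psi_spec_iff R₂ hpsi s
    rw [hvc] at h
    exact h
  have claim2 : ∀ (j : ℕ) (s : List α),
      s ++ (wpow c j ++ v') ∈ R₂.matches' ↔ s ++ v' ∈ R₂.matches' := by
    intro j
    induction j with
    | zero => intro s; rw [show wpow c 0 = [] from rfl, List.nil_append]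
    | succ n ih =>
      intro s
      rw [show wpow c (n + 1) = c ++ wpow c n from rfl, List.append_assoc,
        ← List.append_assoc s c (wpow c n ++ v')]
      rw [ih (s ++ c), List.append_assoc]
      exact hstep2 s
  refine hno ⟨u, [], c, v', by simpa using hc0, fun i => ?_, fun j => ?_⟩
  · simp only [List.nil_append, List.append_nil]
    have h := claim1 i []
    simp only [List.append_nil] at h
    exact h.2 hu
  · simp only [List.nil_append]
    rw [List.append_assoc]
    refine (claim2 j c).2 ?_
    rw [← hvc]
    exact hv

/-- Theorem 2(b): for unambiguous `R₁`, `R₂` with overlapping languages, if the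
word-level pumping condition fails then `R₁·R₂` is finitely ambiguous. -/
theorem stmt_3 {α : Type u} (R₁ R₂ : RegularExpression α)
    (h₁ : Unambiguous R₁) (h₂ : Unambiguous R₂)
    (hov : Overlaps R₁.matches' R₂.matches')
    (hno : ¬ ∃ b d e g : List α, d ++ e ≠ [] ∧
        (∀ i : ℕ, b ++ wpow (d ++ e) i ++ d ∈ R₁.matches') ∧
        (∀ j : ℕ, e ++ wpow (d ++ e) j ++ g ∈ R₂.matches')) :
    FinitelyAmbiguous (R₁ * R₂) := by

  constructor
  · -- Ambiguous
    obtain ⟨x, y, a, ha, hx, hxa, hay, hy⟩ := hov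
    obtain ⟨t₁⟩ := tree_of_mem R₁ x hx
    obtain ⟨t₂⟩ := tree_of_mem R₂ (a ++ y) hay
    obtain ⟨t₁'⟩ := tree_of_mem R₁ (x ++ a) hxa
    obtain ⟨t₂'⟩ := tree_of_mem R₂ y hy
    refine ⟨x ++ (a ++ y), ParseTree.comp t₁ t₂,
      (List.append_assoc x a y) ▸ ParseTree.comp t₁' t₂', ?_⟩
    intro hEq
    have hL : leftW (ParseTree.comp t₁ t₂) = x := rfl
    have hL' : leftW ((List.append_assoc x a y) ▸ ParseTree.comp t₁' t₂') = x ++ a := by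
      rw [leftW_cast]; rfl
    have hxx : x = x ++ a := by
      have h := congrArg leftW hEq
      rw [hL, hL'] at h
      exact h
    have hlen := congrArg List.length hxx
    simp only [List.length_append] at hlen
    exact ha (List.length_eq_zero_iff.1 (by omega))
  · -- Bounded
    refine ⟨Fintype.card (tau R₁ × tau (rrev R₂)), ?_⟩
    intro w l hl
    have hinj : ∀ t ∈ l, ∀ t' ∈ l,
        (fun t : ParseTree (R₁ * R₂) w => (phi R₁ (leftW t), psi R₂ (rightW t))) t =
        (fun t : ParseTree (R₁ * R₂) w => (phi R₁ (leftW t), psi R₂ (rightW t))) t' →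
        t = t' := by
      intro t _ t' _ hpair
      simp only at hpair
      have hphi : phi R₁ (leftW t) = phi R₁ (leftW t') := congrArg Prod.fst hpair
      have hpsi : psi R₂ (rightW t) = psi R₂ (rightW t') := congrArg Prod.snd hpair
      by_cases hlw : leftW t = leftW t'
      · exact eq_of_leftW_eq h₁ h₂ t t' hlw
      · exfalso
        have hsplit : leftW t ++ rightW t = leftW t' ++ rightW t' :=
          (leftW_append_rightW t).trans (leftW_append_rightW t').symm
        have hlen : (leftW t).length ≠ (leftW t').length := fun hle =>
          hlw (List.append_inj hsplit hle).1
        rcases hlen.lt_or_gt with hlt | hlt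
        · exact no_pump hno (leftW_mem t) (rightW_mem t) hsplit hlt hphi hpsi
        · exact no_pump hno (leftW_mem t') (rightW_mem t') hsplit.symm hlt
            hphi.symm hpsi.symm
    have hmap := (hl.map_on hinj).length_le_card
    simpa using hmap
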